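/- Constant-variance corollary: suppose Var[U_θ] = b for all θ ∈ Θ (constant empirical variance), with the ideal prior p_i = U_{θ̃}(X_i)/C, C = Σ_j U_{θ̃}(X_j) > 0, and θ̃ maximizing U(θ) = (1/N)Σ_i U_θ(X_i). Then θ̃ maximizes U_p(θ) = Σ_i U_θ(X_i)p_i over Θ; i.e., U_p(θ) ≤ U_p(θ̃) for all θ. -/
import Mathlib


theorem constant_variance_corollary {Θ 𝒳 : Type*} (N : ℕ) (hN : 0 < N)
    (X : Fin N → 𝒳) (U : Θ → 𝒳 → ℝ) (θt : Θ)
    (hpos : ∀ θ i, 0 < U θ (X i))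
    (C : ℝ) (hC : C = ∑ j, U θt (X j)) (hCpos : 0 < C)
    (p : Fin N → ℝ) (hp : ∀ i, p i = U θt (X i) / C)
    (Ubar : Θ → ℝ) (hUbar : ∀ θ, Ubar θ = (1 / N) * ∑ i, U θ (X i))
    (hmax : ∀ θ, Ubar θ ≤ Ubar θt)
    (b : ℝ)
    (hvar : ∀ θ, ∑ i, (U θ (X i) - Ubar θ) ^ 2 = b) :
    ∀ θ, ∑ i, U θ (X i) * p i ≤ ∑ i, U θt (X i) * p i := by
  intro θ
  have hNpos : (0:ℝ) < N := by exact_mod_cast hN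
  have hsum : ∀ θ', ∑ i, U θ' (X i) = N * Ubar θ' := by
    intro θ'
    rw [hUbar θ']
    field_simp
  have hb0 : 0 ≤ b := by
    rw [← hvar θt]
    exact Finset.sum_nonneg fun i _ => sq_nonneg _
  -- Cauchy-Schwarz
  have hcs : (∑ i, (U θ (X i) - Ubar θ) * (U θt (X i) - Ubar θt)) ^ 2 ≤ b * b := by
    have := Finset.sum_mul_sq_le_sq_mul_sq Finset.univ
      (fun i => U θ (X i) - Ubar θ) (fun i => U θt (X i) - Ubar θt)
    simpa [hvar θ, hvar θt] using this
  have hcov : ∑ i, (U θ (X i) - Ubar θ) * (U θt (X i) - Ubar θt) ≤ b := by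
    nlinarith [hcs, hb0]
  -- expand covariance
  have hexp : ∑ i, (U θ (X i) - Ubar θ) * (U θt (X i) - Ubar θt)
      = (∑ i, U θ (X i) * U θt (X i)) - N * Ubar θ * Ubar θt := by
    have : ∀ i : Fin N, (U θ (X i) - Ubar θ) * (U θt (X i) - Ubar θt)
        = U θ (X i) * U θt (X i) - Ubar θt * U θ (X i) - Ubar θ * U θt (X i)
          + Ubar θ * Ubar θt := by intro i; ring
    simp only [this]
    rw [Finset.sum_add_distrib, Finset.sum_sub_distrib, Finset.sum_sub_distrib,
      ← Finset.mul_sum, ← Finset.mul_sum, hsum θ, hsum θt]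
    simp [Finset.sum_const]
    ring
  have hexp2 : ∑ i, (U θt (X i) - Ubar θt) ^ 2
      = (∑ i, U θt (X i) * U θt (X i)) - N * Ubar θt * Ubar θt := by
    have : ∀ i : Fin N, (U θt (X i) - Ubar θt) ^ 2
        = U θt (X i) * U θt (X i) - Ubar θt * U θt (X i) - Ubar θt * U θt (X i)
          + Ubar θt * Ubar θt := by intro i; ring
    simp only [this]
    rw [Finset.sum_add_distrib, Finset.sum_sub_distrib, Finset.sum_sub_distrib,
      ← Finset.mul_sum, ← Finset.mul_sum, hsum θt]
    simp [Finset.sum_const]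
    ring
  have hbart : 0 < Ubar θt := by
    rw [hUbar]
    have : 0 < ∑ i, U θt (X i) := hC ▸ hCpos
    positivity
  have hkey : ∑ i, U θ (X i) * U θt (X i) ≤ ∑ i, U θt (X i) * U θt (X i) := by
    have h1 : (∑ i, U θ (X i) * U θt (X i)) - N * Ubar θ * Ubar θt ≤ b := hexp ▸ hcov
    have h2 : (∑ i, U θt (X i) * U θt (X i)) - N * Ubar θt * Ubar θt = b := by
      rw [← hexp2, hvar θt]
    have h3 := mul_le_mul_of_nonneg_left (mul_le_mul_of_nonneg_right (hmax θ) hbart.le) hNpos.le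
    linarith
  calc ∑ i, U θ (X i) * p i = (∑ i, U θ (X i) * U θt (X i)) / C := by
        simp only [hp]; rw [Finset.sum_div]; congr 1; ext i; ring
    _ ≤ (∑ i, U θt (X i) * U θt (X i)) / C := by
        gcongr
    _ = ∑ i, U θt (X i) * p i := by
        simp only [hp]; rw [Finset.sum_div]; congr 1; ext i; ring
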